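/- For cochain maps f : C → D and g : D → C of R-module cochain complexes, the mapping 1-tori T(fg) and T(gf) are chain homotopy equivalent as R[z,z^{-1}]-module cochain complexes (the Mather trick). -/

import Mathlib

open scoped TensorProduct

noncomputable section

variable (R : Type) [CommRing R]

/-- The Laurent polynomial ring `R[z,z⁻¹]`. -/
abbrev L := LaurentPolynomial R

/-- The indeterminate `z ∈ R[z,z⁻¹]`. -/
noncomputable def zvar : L R := LaurentPolynomial.T 1

variable (C : ℤ → Type) [∀ n, AddCommGroup (C n)] [∀ n, Module R (C n)]

/-- The `n`-th term of the mapping 1-torus of a self map of `C`: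
the cone of `h ⊗ id − id ⊗ z` on `C ⊗_R R[z,z⁻¹]` (Laurent factor written on the left). -/
def torusX (n : ℤ) : Type := (L R ⊗[R] C (n + 1)) × (L R ⊗[R] C n)

instance (n : ℤ) : AddCommGroup (torusX R C n) := by unfold torusX; infer_instance
instance (n : ℤ) : Module (L R) (torusX R C n) := by unfold torusX; infer_instance

/-- The differential of the mapping 1-torus `T(h)`:
`(x, y) ↦ (−(d⊗id) x, (h⊗id − id⊗z) x + (d⊗id) y)`. -/
def torusD (dC : ∀ n, C n →ₗ[R] C (n + 1)) (h : ∀ n, C n →ₗ[R] C n) (n : ℤ) :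
    torusX R C n →ₗ[L R] torusX R C (n + 1) :=
  LinearMap.prod
    (-((LinearMap.baseChange (L R) (dC (n + 1))).comp
        (LinearMap.fst (L R) (L R ⊗[R] C (n + 1)) (L R ⊗[R] C n))))
    (((LinearMap.baseChange (L R) (h (n + 1))
        - LinearMap.lsmul (L R) (L R ⊗[R] C (n + 1)) (zvar R)).comp
        (LinearMap.fst (L R) (L R ⊗[R] C (n + 1)) (L R ⊗[R] C n)))
      + ((LinearMap.baseChange (L R) (dC n)).comp
        (LinearMap.snd (L R) (L R ⊗[R] C (n + 1)) (L R ⊗[R] C n))))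

lemma baseChange_comm_apply {R : Type} [CommRing R] {A : Type} [CommRing A] [Algebra R A]
    {M N N' P : Type} [AddCommGroup M] [Module R M] [AddCommGroup N] [Module R N]
    [AddCommGroup N'] [Module R N'] [AddCommGroup P] [Module R P]
    (u : M →ₗ[R] N) (v : N →ₗ[R] P) (u' : M →ₗ[R] N') (v' : N' →ₗ[R] P)
    (h : ∀ x, v (u x) = v' (u' x)) (t : A ⊗[R] M) :
    v.baseChange A (u.baseChange A t) = v'.baseChange A (u'.baseChange A t) := by
  have h2 : (v.comp u).baseChange A = (v'.comp u').baseChange A := by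
    congr 1; exact LinearMap.ext h
  have := congrFun (congrArg DFunLike.coe h2) t
  simpa [LinearMap.baseChange_comp] using this

lemma baseChange_comp_apply {R : Type} [CommRing R] {A : Type} [CommRing A] [Algebra R A]
    {M N P : Type} [AddCommGroup M] [Module R M] [AddCommGroup N] [Module R N]
    [AddCommGroup P] [Module R P]
    (u : M →ₗ[R] N) (v : N →ₗ[R] P) (t : A ⊗[R] M) :
    (v.comp u).baseChange A t = v.baseChange A (u.baseChange A t) := by
  rw [LinearMap.baseChange_comp]; rfl


section Aux
variable (D : ℤ → Type) [∀ n, AddCommGroup (D n)] [∀ n, Module R (D n)]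

/-- The value of the torus differential on a pair. -/
lemma torusD_apply (dC : ∀ n, C n →ₗ[R] C (n + 1)) (h : ∀ n, C n →ₗ[R] C n) (n : ℤ)
    (x : L R ⊗[R] C (n + 1)) (y : L R ⊗[R] C n) :
    torusD R C dC h n (x, y)
      = ((-(LinearMap.baseChange (L R) (dC (n + 1)) x),
          (LinearMap.baseChange (L R) (h (n + 1)) x - zvar R • x)
            + LinearMap.baseChange (L R) (dC n) y) : torusX R C (n + 1)) := rfl

/-- The degreewise base change of a map of complexes, on tori. -/
def mtTorusMap (f : ∀ n, C n →ₗ[R] D n) (n : ℤ) : torusX R C n →ₗ[L R] torusX R D n :=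
  LinearMap.prodMap (LinearMap.baseChange (L R) (f (n + 1))) (LinearMap.baseChange (L R) (f n))

lemma mtTorusMap_apply (f : ∀ n, C n →ₗ[R] D n) (n : ℤ)
    (x : L R ⊗[R] C (n + 1)) (y : L R ⊗[R] C n) :
    mtTorusMap R C D f n (x, y)
      = ((LinearMap.baseChange (L R) (f (n + 1)) x, LinearMap.baseChange (L R) (f n) y) :
          torusX R D n) := rfl

lemma smul_mtTorusMap_apply (c : L R) (f : ∀ n, C n →ₗ[R] D n) (n : ℤ)
    (x : L R ⊗[R] C (n + 1)) (y : L R ⊗[R] C n) :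
    (c • mtTorusMap R C D f n) (x, y)
      = ((c • LinearMap.baseChange (L R) (f (n + 1)) x,
          c • LinearMap.baseChange (L R) (f n) y) : torusX R D n) := rfl

/-- The standard degree `-1` map on a torus. -/
def mtTorusS (n : ℤ) : torusX R C (n + 1) →ₗ[L R] torusX R C n :=
  LinearMap.prod
    ((LaurentPolynomial.T (-1) : L R) •
      LinearMap.snd (L R) (L R ⊗[R] C (n + 1 + 1)) (L R ⊗[R] C (n + 1))) 0

lemma mtTorusS_apply (n : ℤ) (x : L R ⊗[R] C (n + 1 + 1)) (y : L R ⊗[R] C (n + 1)) :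
    mtTorusS R C n (x, y)
      = (((LaurentPolynomial.T (-1) : L R) • y, 0) : torusX R C n) := rfl

lemma torusX_mk_add (n : ℤ) (a b : L R ⊗[R] C (n + 1)) (c d : L R ⊗[R] C n) :
    (((a, c) : torusX R C n) + (b, d)) = ((a + b, c + d) : torusX R C n) := rfl

lemma torusX_mk_sub (n : ℤ) (a b : L R ⊗[R] C (n + 1)) (c d : L R ⊗[R] C n) :
    (((a, c) : torusX R C n) - (b, d)) = ((a - b, c - d) : torusX R C n) := rfl

lemma torusX_smul_mk (n : ℤ) (c : L R) (a : L R ⊗[R] C (n + 1)) (b : L R ⊗[R] C n) :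
    (c • ((a, b) : torusX R C n)) = ((c • a, c • b) : torusX R C n) := rfl

lemma torusX_neg_mk (n : ℤ) (a : L R ⊗[R] C (n + 1)) (b : L R ⊗[R] C n) :
    (-((a, b) : torusX R C n)) = ((-a, -b) : torusX R C n) := rfl

end Aux

set_option maxHeartbeats 1000000 in
/-- The Mather trick: for cochain maps `f : C → D` and `g : D → C` of complexes of
`R`-modules, the mapping 1-tori `T(g ∘ f)` and `T(f ∘ g)` are chain homotopy equivalent as
complexes of `R[z,z⁻¹]`-modules. -/
theorem mappingOneTorus_mather_trick
    (D : ℤ → Type) [∀ n, AddCommGroup (D n)] [∀ n, Module R (D n)]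
    (dC : ∀ n, C n →ₗ[R] C (n + 1)) (dD : ∀ n, D n →ₗ[R] D (n + 1))
    (hCsq : ∀ n (x : C n), dC (n + 1) (dC n x) = 0)
    (hDsq : ∀ n (x : D n), dD (n + 1) (dD n x) = 0)
    (f : ∀ n, C n →ₗ[R] D n) (g : ∀ n, D n →ₗ[R] C n)
    (hf : ∀ n (x : C n), f (n + 1) (dC n x) = dD n (f n x))
    (hg : ∀ n (x : D n), g (n + 1) (dD n x) = dC n (g n x)) :
    ∃ (φ : ∀ n, torusX R C n →ₗ[L R] torusX R D n)
      (ψ : ∀ n, torusX R D n →ₗ[L R] torusX R C n)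
      (s : ∀ n, torusX R C (n + 1) →ₗ[L R] torusX R C n)
      (t : ∀ n, torusX R D (n + 1) →ₗ[L R] torusX R D n),
      -- `φ` and `ψ` are chain maps between `T(g∘f)` and `T(f∘g)`:
      (∀ n (x : torusX R C n),
        φ (n + 1) (torusD R C dC (fun m => (g m).comp (f m)) n x)
          = torusD R D dD (fun m => (f m).comp (g m)) n (φ n x)) ∧
      (∀ n (y : torusX R D n),
        ψ (n + 1) (torusD R D dD (fun m => (f m).comp (g m)) n y)
          = torusD R C dC (fun m => (g m).comp (f m)) n (ψ n y)) ∧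
      -- `s` is a homotopy from `ψ ∘ φ` to the identity:
      (∀ n (x : torusX R C (n + 1)),
        ψ (n + 1) (φ (n + 1) x) - x
          = torusD R C dC (fun m => (g m).comp (f m)) n (s n x)
            + s (n + 1) (torusD R C dC (fun m => (g m).comp (f m)) (n + 1) x)) ∧
      -- `t` is a homotopy from `φ ∘ ψ` to the identity:
      (∀ n (y : torusX R D (n + 1)),
        φ (n + 1) (ψ (n + 1) y) - y
          = torusD R D dD (fun m => (f m).comp (g m)) n (t n y)
            + t (n + 1) (torusD R D dD (fun m => (f m).comp (g m)) (n + 1) y)) := by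
  classical
  set zinv : L R := LaurentPolynomial.T (-1) with hzinv
  have hz : zinv * zvar R = 1 := by
    rw [zvar, hzinv, ← LaurentPolynomial.T_add]; simp
  have hzsmul : ∀ {M : Type} [AddCommGroup M] [Module (L R) M] (x : M),
      zinv • zvar R • x = x := by
    intro M _ _ x; rw [smul_smul, hz, one_smul]
  have hzsmul' : ∀ {M : Type} [AddCommGroup M] [Module (L R) M] (x : M),
      zvar R • zinv • x = x := by
    intro M _ _ x; rw [smul_smul, mul_comm, hz, one_smul]
  refine ⟨mtTorusMap R C D f, fun n => zinv • mtTorusMap R D C g n,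
    mtTorusS R C, mtTorusS R D, ?_, ?_, ?_, ?_⟩
  · rintro n ⟨x, y⟩
    have h1 := baseChange_comm_apply (A := L R) (dC (n + 1)) (f (n + 1 + 1))
      (f (n + 1)) (dD (n + 1)) (hf (n + 1)) x
    have h2 := baseChange_comm_apply (A := L R) (dC n) (f (n + 1))
      (f n) (dD n) (hf n) y
    have h3 := baseChange_comm_apply (A := L R) ((g (n + 1)).comp (f (n + 1))) (f (n + 1))
      (f (n + 1)) ((f (n + 1)).comp (g (n + 1))) (fun x => rfl) x
    simp only [torusD_apply, mtTorusMap_apply, Prod.mk.injEq, map_neg, map_add, map_sub,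
      map_smul, h1, h2, h3]
    rfl
  · rintro n ⟨x, y⟩
    have h1 := baseChange_comm_apply (A := L R) (dD (n + 1)) (g (n + 1 + 1))
      (g (n + 1)) (dC (n + 1)) (hg (n + 1)) x
    have h2 := baseChange_comm_apply (A := L R) (dD n) (g (n + 1))
      (g n) (dC n) (hg n) y
    have h3 := baseChange_comm_apply (A := L R) ((f (n + 1)).comp (g (n + 1))) (g (n + 1))
      (g (n + 1)) ((g (n + 1)).comp (f (n + 1))) (fun x => rfl) x
    simp only [torusD_apply, mtTorusMap_apply, smul_mtTorusMap_apply, Prod.mk.injEq,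
      map_neg, map_add, map_sub, map_smul, h1, h2, h3, smul_add, smul_sub, smul_neg]
    rw [smul_comm]
  · rintro n ⟨x, y⟩
    have hx := baseChange_comp_apply (A := L R) (f (n + 1 + 1)) (g (n + 1 + 1)) x
    have hy := baseChange_comp_apply (A := L R) (f (n + 1)) (g (n + 1)) y
    simp only [torusD_apply, mtTorusMap_apply, smul_mtTorusMap_apply, mtTorusS_apply,
      torusX_mk_add, torusX_mk_sub, Prod.mk.injEq, map_neg, map_add, map_sub, map_smul,
      map_zero, hx, hy, smul_add, smul_sub, smul_neg, add_zero, zero_add, sub_zero,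
      torusX_smul_mk, torusX_neg_mk, ← hzinv]
    erw [torusX_mk_sub, torusX_mk_add, Prod.mk.injEq]
    constructor
    · rw [smul_smul, hz, one_smul]; abel
    · rw [smul_smul, mul_comm, hz, one_smul]; abel
  · rintro n ⟨x, y⟩
    have hx := baseChange_comp_apply (A := L R) (g (n + 1 + 1)) (f (n + 1 + 1)) x
    have hy := baseChange_comp_apply (A := L R) (g (n + 1)) (f (n + 1)) y
    simp only [torusD_apply, mtTorusMap_apply, smul_mtTorusMap_apply, mtTorusS_apply,
      torusX_mk_add, torusX_mk_sub, Prod.mk.injEq, map_neg, map_add, map_sub, map_smul,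
      map_zero, hx, hy, smul_add, smul_sub, smul_neg, add_zero, zero_add, sub_zero,
      torusX_smul_mk, torusX_neg_mk, ← hzinv]
    erw [torusX_mk_sub, torusX_mk_add, Prod.mk.injEq]
    constructor
    · rw [smul_smul, hz, one_smul]; abel
    · rw [smul_smul, mul_comm, hz, one_smul]; abel

end
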